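/- Let F : ℝⁿ → ℝ be twice continuously differentiable with L₂-Lipschitz Hessian, and let α > 0. Fix x ∈ ℝⁿ, g ∈ ℝⁿ, and a symmetric matrix Ĥ ∈ ℝ^{n×n}, and let x⁺ be a global minimizer over ℝⁿ of the model f̂(y) = ⟨g, y − x⟩ + (1/2)⟨y − x, Ĥ(y − x)⟩ + (α/6)‖y − x‖³. Then ‖∇F(x⁺)‖ ≤ (L₂ + α)‖x⁺ − x‖² + ‖∇F(x) − g‖ + (1/(2(L₂ + α))) ‖∇²F(x) − Ĥ‖², where the Hessian difference is measured in spectral norm. -/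

import Mathlib

open scoped BigOperators

/-- The spectral norm of a real square matrix: the operator norm of the associated
continuous linear endomorphism of Euclidean space. -/
noncomputable def specNorm {n : ℕ} (A : Matrix (Fin n) (Fin n) ℝ) : ℝ :=
  ‖Matrix.toEuclideanCLM (𝕜 := ℝ) A‖

set_option maxHeartbeats 1000000
set_option synthInstance.maxHeartbeats 400000
open scoped RealInnerProductSpace
open Matrix

lemma specNorm_transpose {n : ℕ} (A : Matrix (Fin n) (Fin n) ℝ) : specNorm Aᵀ = specNorm A := by
  have h : Aᵀ = star A := by ext i j; simp [Matrix.star_apply]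
  rw [specNorm, h, map_star, ContinuousLinearMap.star_eq_adjoint,
    LinearIsometryEquiv.norm_map (ContinuousLinearMap.adjoint
      (E := EuclideanSpace ℝ (Fin n)) (F := EuclideanSpace ℝ (Fin n)))]
  rfl

lemma mulVec_norm_le {n : ℕ} (A : Matrix (Fin n) (Fin n) ℝ) (v : EuclideanSpace ℝ (Fin n)) :
    ‖Matrix.toEuclideanCLM (𝕜 := ℝ) A v‖ ≤ specNorm A * ‖v‖ :=
  (Matrix.toEuclideanCLM (𝕜 := ℝ) A).le_opNorm v

lemma matFunc {n : ℕ} (M : Matrix (Fin n) (Fin n) ℝ) (s w : EuclideanSpace ℝ (Fin n)) :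
    ∑ i, ∑ j, s i * M i j * w j = ⟪Matrix.toEuclideanCLM (𝕜 := ℝ) Mᵀ s, w⟫ := by
  have h2 : ∀ j, (Matrix.toEuclideanCLM (𝕜 := ℝ) Mᵀ s) j = Mᵀ.mulVec s j := by
    intro j
    have h := Matrix.ofLp_toEuclideanCLM (𝕜 := ℝ) Mᵀ s
    have := congrFun h j
    simpa [Matrix.toLin'_apply] using this
  simp only [PiLp.inner_apply, RCLike.inner_apply, starRingEnd_apply, star_trivial]
  simp only [h2, Matrix.mulVec, dotProduct, Matrix.transpose_apply]
  rw [Finset.sum_comm]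
  congr 1; ext j; rw [Finset.mul_sum]; congr 1; ext i; ring

lemma cube_fderiv {E : Type*} [NormedAddCommGroup E] [InnerProductSpace ℝ E] (p : E) :
    HasFDerivAt (fun y : E => ‖y‖ ^ 3) ((3 * ‖p‖) • (innerSL ℝ p)) p := by
  have h1 : HasFDerivAt (fun y : E => (⟪y, y⟫ : ℝ)) ((2:ℝ) • (innerSL ℝ p)) p := by
    have := (hasFDerivAt_id p).inner ℝ (hasFDerivAt_id p)
    refine this.congr_fderiv ?_
    ext w
    simp [fderivInnerCLM, real_inner_comm, two_smul]
  have h2 : HasDerivAt (fun u : ℝ => u ^ (3/2 : ℝ)) ((3/2) * (⟪p, p⟫ : ℝ) ^ (1/2 : ℝ)) (⟪p, p⟫ : ℝ) := by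
    have := Real.hasDerivAt_rpow_const (x := (⟪p, p⟫ : ℝ)) (p := 3/2) (Or.inr (by norm_num))
    convert this using 2
    norm_num
  have h3 := HasDerivAt.comp_hasFDerivAt (f := fun y : E => (⟪y, y⟫ : ℝ)) p h2 h1
  have e1 : ∀ y : E, (⟪y, y⟫ : ℝ) ^ (3/2 : ℝ) = ‖y‖ ^ 3 := by
    intro y
    rw [real_inner_self_eq_norm_sq, ← Real.rpow_natCast ‖y‖ 2, ← Real.rpow_mul (norm_nonneg y),
      ← Real.rpow_natCast ‖y‖ 3]
    norm_num
  have e2 : (⟪p, p⟫ : ℝ) ^ (1/2 : ℝ) = ‖p‖ := by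
    rw [real_inner_self_eq_norm_sq, ← Real.rpow_natCast ‖p‖ 2, ← Real.rpow_mul (norm_nonneg p)]
    norm_num
  have h4 : HasFDerivAt (fun y : E => ‖y‖ ^ 3)
      (((3/2) * (⟪p, p⟫ : ℝ) ^ (1/2 : ℝ)) • ((2:ℝ) • (innerSL ℝ p))) p := by
    refine h3.congr_of_eventuallyEq ?_
    filter_upwards with y using (e1 y).symm
  convert h4 using 1
  rw [e2, smul_smul]
  ring_nf

section Taylor

variable {n : ℕ}

/-- Second derivative functional in terms of the Hessian matrix. -/
lemma Aeq {n : ℕ} (F : EuclideanSpace ℝ (Fin n) → ℝ)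
    (HF : EuclideanSpace ℝ (Fin n) → Matrix (Fin n) (Fin n) ℝ)
    (hHF : ∀ (y : EuclideanSpace ℝ (Fin n)) (w₁ w₂ : EuclideanSpace ℝ (Fin n)),
      iteratedFDeriv ℝ 2 F y ![w₁, w₂] = ∑ i, ∑ j, w₁ i * HF y i j * w₂ j)
    (y s : EuclideanSpace ℝ (Fin n)) :
    fderiv ℝ (fderiv ℝ F) y s = innerSL ℝ (Matrix.toEuclideanCLM (𝕜 := ℝ) (HF y)ᵀ s) := by
  ext w
  have h := hHF y s w
  rw [iteratedFDeriv_two_apply] at h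
  simp only [Matrix.cons_val_zero, Matrix.cons_val_one, Matrix.head_cons] at h
  rw [h, matFunc]
  rfl

lemma taylor_grad (F : EuclideanSpace ℝ (Fin n) → ℝ) (hF : ContDiff ℝ 2 F)
    (x s : EuclideanSpace ℝ (Fin n)) (C : ℝ)
    (hbound : ∀ t : ℝ, t ∈ Set.Icc (0:ℝ) 1 →
      ‖fderiv ℝ (fderiv ℝ F) (x + t • s) s - fderiv ℝ (fderiv ℝ F) x s‖ ≤ C * t) :
    ‖fderiv ℝ F (x + s) - fderiv ℝ F x - fderiv ℝ (fderiv ℝ F) x s‖ ≤ C / 2 := by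
  set A := fderiv ℝ (fderiv ℝ F) with hA
  have hC1 : ContDiff ℝ 1 (fderiv ℝ F) := hF.fderiv_right (by norm_num)
  have hAy : ∀ y, HasFDerivAt (fderiv ℝ F) (A y) y := fun y =>
    (hC1.differentiable one_ne_zero y).hasFDerivAt
  have hAcont : Continuous A := by
    have : ContDiff ℝ 0 A := hC1.fderiv_right (by norm_num)
    exact this.continuous
  -- the curve
  have hline : ∀ t : ℝ, HasDerivAt (fun t : ℝ => x + t • s) s t := by
    intro t
    simpa using ((hasDerivAt_id t).smul_const s).const_add x
  set χ : ℝ → (EuclideanSpace ℝ (Fin n) →L[ℝ] ℝ) :=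
    fun t => fderiv ℝ F (x + t • s) - t • (A x s) with hχ
  have hχ' : ∀ t : ℝ, HasDerivAt χ (A (x + t • s) s - A x s) t := by
    intro t
    have h1 : HasDerivAt (fun t : ℝ => fderiv ℝ F (x + t • s)) (A (x + t • s) s) t :=
      (hAy (x + t • s)).comp_hasDerivAt t (hline t)
    have h2 : HasDerivAt (fun t : ℝ => t • (A x s)) (A x s) t := by
      simpa using (hasDerivAt_id t).smul_const (A x s)
    exact h1.sub h2
  have hcont : Continuous fun t : ℝ => A (x + t • s) s - A x s := by
    have hc1 : Continuous fun t : ℝ => A (x + t • s) :=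
      hAcont.comp (by continuity)
    exact ((ContinuousLinearMap.apply ℝ (EuclideanSpace ℝ (Fin n) →L[ℝ] ℝ) s).continuous.comp
      hc1).sub continuous_const
  have hint : IntervalIntegrable (fun t : ℝ => A (x + t • s) s - A x s)
      MeasureTheory.volume 0 1 := hcont.intervalIntegrable 0 1
  have hFTC : ∫ t in (0:ℝ)..1, (A (x + t • s) s - A x s) = χ 1 - χ 0 :=
    intervalIntegral.integral_eq_sub_of_hasDerivAt (fun t _ => hχ' t) hint
  have hval : χ 1 - χ 0 = fderiv ℝ F (x + s) - fderiv ℝ F x - A x s := by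
    simp only [hχ, one_smul, zero_smul, sub_zero, add_zero]
    abel
  have hnorm : ‖∫ t in (0:ℝ)..1, (A (x + t • s) s - A x s)‖ ≤ |∫ t in (0:ℝ)..1, C * t| := by
    apply intervalIntegral.norm_integral_le_abs_of_norm_le
    · filter_upwards [MeasureTheory.ae_restrict_mem measurableSet_Ioc] with t ht
      rw [Set.uIoc_of_le (by norm_num : (0:ℝ) ≤ 1)] at ht
      exact hbound t ⟨le_of_lt ht.1, ht.2⟩
    · exact (continuous_const.mul continuous_id).intervalIntegrable 0 1
  have hCval : ∫ t in (0:ℝ)..1, C * t = C / 2 := by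
    rw [intervalIntegral.integral_const_mul, integral_id]
    ring
  rw [hFTC, hval] at hnorm
  rw [hCval] at hnorm
  calc ‖fderiv ℝ F (x + s) - fderiv ℝ F x - A x s‖ ≤ |C / 2| := hnorm
    _ = C / 2 := by
        rcases le_or_gt 0 C with h | h
        · exact abs_of_nonneg (by linarith)
        · exfalso
          have := hbound 1 ⟨by norm_num, le_rfl⟩
          have h0 : (0:ℝ) ≤ C * 1 := le_trans (norm_nonneg _) this
          linarith

end Taylor

/-- Let `F : ℝⁿ → ℝ` be twice continuously differentiable with `L₂`-Lipschitz
Hessian (where `HF y` is the Hessian matrix of `F` at `y`), and let `α > 0`.  Fix `x`, `g` and a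
symmetric matrix `Ĥ`, and let `x⁺` be a global minimizer over `ℝⁿ` of the model
`f̂(y) = ⟨g, y−x⟩ + (1/2)⟨y−x, Ĥ(y−x)⟩ + (α/6)‖y−x‖³`.  Then
`‖∇F(x⁺)‖ ≤ (L₂+α)‖x⁺−x‖² + ‖∇F(x) − g‖ + (1/(2(L₂+α)))‖∇²F(x) − Ĥ‖²`. -/
theorem statement15 {n : ℕ} (F : EuclideanSpace ℝ (Fin n) → ℝ) (hF : ContDiff ℝ 2 F)
    (HF : EuclideanSpace ℝ (Fin n) → Matrix (Fin n) (Fin n) ℝ)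
    (hHF : ∀ (y : EuclideanSpace ℝ (Fin n)) (w₁ w₂ : EuclideanSpace ℝ (Fin n)),
      iteratedFDeriv ℝ 2 F y ![w₁, w₂] = ∑ i, ∑ j, w₁ i * HF y i j * w₂ j)
    (L₂ : ℝ) (hL₂ : 0 ≤ L₂)
    (hLip : ∀ x y : EuclideanSpace ℝ (Fin n), specNorm (HF x - HF y) ≤ L₂ * ‖x - y‖)
    (α : ℝ) (hα : 0 < α)
    (x g : EuclideanSpace ℝ (Fin n)) (Hhat : Matrix (Fin n) (Fin n) ℝ) (hHhat : Hhat.IsSymm)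
    (xplus : EuclideanSpace ℝ (Fin n))
    (hmin : ∀ y : EuclideanSpace ℝ (Fin n),
      (∑ i, g i * (xplus - x) i) +
          (1 / 2) * (∑ i, ∑ j, (xplus - x) i * Hhat i j * (xplus - x) j) +
          (α / 6) * ‖xplus - x‖ ^ 3 ≤
        (∑ i, g i * (y - x) i) + (1 / 2) * (∑ i, ∑ j, (y - x) i * Hhat i j * (y - x) j) +
          (α / 6) * ‖y - x‖ ^ 3) :
    ‖gradient F xplus‖ ≤
      (L₂ + α) * ‖xplus - x‖ ^ 2 + ‖gradient F x - g‖ +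
        (1 / (2 * (L₂ + α))) * specNorm (HF x - Hhat) ^ 2 := by
  classical
  have hpos : 0 < L₂ + α := by linarith
  set s : EuclideanSpace ℝ (Fin n) := xplus - x with hs
  set T : EuclideanSpace ℝ (Fin n) →L[ℝ] EuclideanSpace ℝ (Fin n) :=
    Matrix.toEuclideanCLM (𝕜 := ℝ) Hhat with hT
  -- self-adjointness of T
  have hstar : star Hhat = Hhat := by
    rw [Matrix.star_eq_conjTranspose]
    ext i j
    simpa [Matrix.conjTranspose_apply] using congrFun (congrFun hHhat.eq i) j
  have hTadj : ContinuousLinearMap.adjoint T = T := by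
    rw [← ContinuousLinearMap.star_eq_adjoint, hT, ← map_star, hstar]
  have hTsym : ∀ v w : EuclideanSpace ℝ (Fin n), ⟪T v, w⟫ = ⟪v, T w⟫ := by
    intro v w
    conv_lhs => rw [← hTadj]
    exact ContinuousLinearMap.adjoint_inner_left T w v
  -- model function and its inner-product form
  set m : EuclideanSpace ℝ (Fin n) → ℝ := fun y =>
    (∑ i, g i * (y - x) i) + (1 / 2) * (∑ i, ∑ j, (y - x) i * Hhat i j * (y - x) j) +
      (α / 6) * ‖y - x‖ ^ 3 with hm
  have hm_eq : ∀ y, m y = ⟪g, y - x⟫ + (1 / 2) * ⟪T (y - x), y - x⟫ + (α / 6) * ‖y - x‖ ^ 3 := by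
    intro y
    have h1 : ∑ i, g i * (y - x) i = ⟪g, y - x⟫ := by
      simp [PiLp.inner_apply, RCLike.inner_apply]
      exact Finset.sum_congr rfl fun i _ => mul_comm _ _
    have h2 := matFunc Hhat (y - x) (y - x)
    rw [hHhat.eq] at h2
    rw [hm]
    simp only [h1, h2, hT]
  -- derivative of the model at xplus
  have h_sub : HasFDerivAt (fun y : EuclideanSpace ℝ (Fin n) => y - x)
      (ContinuousLinearMap.id ℝ (EuclideanSpace ℝ (Fin n))) xplus :=
    (hasFDerivAt_id xplus).sub_const x
  have h_lin : HasFDerivAt (fun y : EuclideanSpace ℝ (Fin n) => (⟪g, y - x⟫ : ℝ))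
      (innerSL ℝ g) xplus := by
    have h := ((innerSL ℝ g).hasFDerivAt (x := s)).comp xplus h_sub
    rw [ContinuousLinearMap.comp_id] at h
    exact h
  have h_Tsub : HasFDerivAt (fun y : EuclideanSpace ℝ (Fin n) => T (y - x)) T xplus := by
    have h := (T.hasFDerivAt (x := s)).comp xplus h_sub
    rw [ContinuousLinearMap.comp_id] at h
    exact h
  have h_quad : HasFDerivAt (fun y : EuclideanSpace ℝ (Fin n) => (⟪T (y - x), y - x⟫ : ℝ))
      ((fderivInnerCLM ℝ (T s, s)).comp (T.prod (ContinuousLinearMap.id ℝ _))) xplus := by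
    have h := h_Tsub.inner ℝ h_sub
    have e : xplus - x = s := rfl
    rw [e] at h
    exact h
  have h_cube : HasFDerivAt (fun y : EuclideanSpace ℝ (Fin n) => ‖y - x‖ ^ 3)
      ((3 * ‖s‖) • innerSL ℝ s) xplus := by
    have h := (cube_fderiv s).comp xplus h_sub
    rw [ContinuousLinearMap.smul_comp, ContinuousLinearMap.comp_id] at h
    exact h
  set c : ℝ := (α / 2) * ‖s‖ with hc
  set D : EuclideanSpace ℝ (Fin n) →L[ℝ] ℝ :=
    innerSL ℝ g + (1 / 2 : ℝ) • ((fderivInnerCLM ℝ (T s, s)).comp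
      (T.prod (ContinuousLinearMap.id ℝ _))) + (α / 6 : ℝ) • ((3 * ‖s‖) • innerSL ℝ s) with hD
  have h_m : HasFDerivAt m D xplus := by
    have h' : HasFDerivAt (fun y : EuclideanSpace ℝ (Fin n) =>
        (⟪g, y - x⟫ : ℝ) + (1 / 2) * ⟪T (y - x), y - x⟫ + (α / 6) * ‖y - x‖ ^ 3) D xplus :=
      (h_lin.add (h_quad.const_mul (1 / 2))).add (h_cube.const_mul (α / 6))
    exact h'.congr_of_eventuallyEq (Filter.Eventually.of_forall hm_eq)
  have hlocmin : IsLocalMin m xplus := Filter.Eventually.of_forall hmin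
  have hD0 : D = 0 := by
    rw [← h_m.fderiv]
    exact hlocmin.fderiv_eq_zero
  -- first-order optimality in vector form
  have hDw : ∀ w, D w = ⟪g + T s + c • s, w⟫ := by
    intro w
    rw [hD]
    simp only [ContinuousLinearMap.add_apply, ContinuousLinearMap.smul_apply,
      ContinuousLinearMap.comp_apply, ContinuousLinearMap.prod_apply,
      ContinuousLinearMap.id_apply, fderivInnerCLM_apply, innerSL_apply_apply, smul_eq_mul]
    have e1 : (⟪T w, s⟫ : ℝ) = ⟪T s, w⟫ := by rw [hTsym w s, real_inner_comm]
    rw [e1, inner_add_left, inner_add_left, real_inner_smul_left, hc]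
    ring
  have hopt : g + T s + c • s = 0 := by
    have h := hDw (g + T s + c • s)
    rw [hD0] at h
    simp only [ContinuousLinearMap.zero_apply] at h
    exact inner_self_eq_zero.mp h.symm
  -- Taylor expansion of the gradient
  have hAdiff : ∀ y : EuclideanSpace ℝ (Fin n),
      fderiv ℝ (fderiv ℝ F) y s = innerSL ℝ (Matrix.toEuclideanCLM (𝕜 := ℝ) (HF y)ᵀ s) :=
    fun y => Aeq F HF hHF y s
  have hbound : ∀ t : ℝ, t ∈ Set.Icc (0:ℝ) 1 →
      ‖fderiv ℝ (fderiv ℝ F) (x + t • s) s - fderiv ℝ (fderiv ℝ F) x s‖ ≤ (L₂ * ‖s‖ ^ 2) * t := by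
    intro t ht
    rw [hAdiff, hAdiff]
    have e : innerSL ℝ (Matrix.toEuclideanCLM (𝕜 := ℝ) ((HF (x + t • s) - HF x)ᵀ) s) =
        innerSL ℝ (Matrix.toEuclideanCLM (𝕜 := ℝ) (HF (x + t • s))ᵀ s) -
        innerSL ℝ (Matrix.toEuclideanCLM (𝕜 := ℝ) (HF x)ᵀ s) := by
      have h1 : (HF (x + t • s) - HF x)ᵀ = (HF (x + t • s))ᵀ - (HF x)ᵀ :=
        Matrix.transpose_sub _ _
      rw [h1, map_sub (Matrix.toEuclideanCLM (𝕜 := ℝ) (n := Fin n))]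
      exact map_sub (innerSL ℝ) _ _
    rw [← e, innerSL_apply_norm]
    calc ‖Matrix.toEuclideanCLM (𝕜 := ℝ) ((HF (x + t • s) - HF x)ᵀ) s‖
        ≤ specNorm ((HF (x + t • s) - HF x)ᵀ) * ‖s‖ := mulVec_norm_le _ _
      _ = specNorm (HF (x + t • s) - HF x) * ‖s‖ := by rw [specNorm_transpose]
      _ ≤ (L₂ * ‖x + t • s - x‖) * ‖s‖ := by
          have := hLip (x + t • s) x
          exact mul_le_mul_of_nonneg_right this (norm_nonneg s)
      _ = (L₂ * ‖s‖ ^ 2) * t := by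
          have : x + t • s - x = t • s := by abel
          rw [this, norm_smul, Real.norm_eq_abs, abs_of_nonneg ht.1]
          ring
  have htay := taylor_grad F hF x s (L₂ * ‖s‖ ^ 2) hbound
  have hxs : x + s = xplus := by rw [hs]; abel
  rw [hxs] at htay
  have htay2 : ‖fderiv ℝ F xplus - fderiv ℝ F x - fderiv ℝ (fderiv ℝ F) x s‖
      ≤ L₂ * ‖s‖ ^ 2 / 2 := htay
  -- Hessian approximation error
  have hBTs : fderiv ℝ (fderiv ℝ F) x s - innerSL ℝ (T s) =
      innerSL ℝ (Matrix.toEuclideanCLM (𝕜 := ℝ) ((HF x - Hhat)ᵀ) s) := by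
    have hTs : T s = Matrix.toEuclideanCLM (𝕜 := ℝ) Hhatᵀ s := by rw [hHhat.eq, hT]
    have h1 : (HF x - Hhat)ᵀ = (HF x)ᵀ - Hhatᵀ := Matrix.transpose_sub _ _
    rw [hAdiff x, hTs, h1, map_sub (Matrix.toEuclideanCLM (𝕜 := ℝ) (n := Fin n))]
    exact (map_sub (innerSL ℝ) _ _).symm
  have hEs : ‖fderiv ℝ (fderiv ℝ F) x s - innerSL ℝ (T s)‖ ≤ specNorm (HF x - Hhat) * ‖s‖ := by
    rw [hBTs, innerSL_apply_norm]
    calc ‖Matrix.toEuclideanCLM (𝕜 := ℝ) ((HF x - Hhat)ᵀ) s‖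
        ≤ specNorm ((HF x - Hhat)ᵀ) * ‖s‖ := mulVec_norm_le _ _
      _ = specNorm (HF x - Hhat) * ‖s‖ := by rw [specNorm_transpose]
  -- gradient vs fderiv
  have hgrad : ∀ y, fderiv ℝ F y = innerSL ℝ (gradient F y) := by
    intro y
    ext w
    show fderiv ℝ F y w = ⟪(InnerProductSpace.toDual ℝ _).symm (fderiv ℝ F y), w⟫
    rw [← InnerProductSpace.toDual_apply_apply, LinearIsometryEquiv.apply_symm_apply]
  have hnormgrad : ‖gradient F xplus‖ = ‖fderiv ℝ F xplus‖ :=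
    LinearIsometryEquiv.norm_map (InnerProductSpace.toDual ℝ _).symm _
  -- decomposition
  have hdecomp : fderiv ℝ F xplus =
      (fderiv ℝ F xplus - fderiv ℝ F x - fderiv ℝ (fderiv ℝ F) x s) +
      innerSL ℝ (gradient F x - g) +
      (fderiv ℝ (fderiv ℝ F) x s - innerSL ℝ (T s)) - c • innerSL ℝ s +
      innerSL ℝ (g + T s + c • s) := by
    have eA : innerSL ℝ (gradient F x - g) = innerSL ℝ (gradient F x) - innerSL ℝ g := by
      ext w; simp [inner_sub_left]
    have eB : innerSL ℝ (g + T s + c • s) =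
        innerSL ℝ g + innerSL ℝ (T s) + c • innerSL ℝ s := by
      ext w; simp [inner_add_left, real_inner_smul_left]
    rw [eA, eB, hgrad x]
    abel
  rw [hopt, map_zero, add_zero] at hdecomp
  have hineq : ‖fderiv ℝ F xplus‖ ≤
      ‖fderiv ℝ F xplus - fderiv ℝ F x - fderiv ℝ (fderiv ℝ F) x s‖ +
      ‖innerSL ℝ (gradient F x - g)‖ +
      ‖fderiv ℝ (fderiv ℝ F) x s - innerSL ℝ (T s)‖ + ‖c • innerSL ℝ s‖ := by
    conv_lhs => rw [hdecomp]
    have h1 := norm_sub_le ((fderiv ℝ F xplus - fderiv ℝ F x - fderiv ℝ (fderiv ℝ F) x s) +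
      innerSL ℝ (gradient F x - g) + (fderiv ℝ (fderiv ℝ F) x s - innerSL ℝ (T s)))
      (c • innerSL ℝ s)
    have h2 := norm_add_le ((fderiv ℝ F xplus - fderiv ℝ F x - fderiv ℝ (fderiv ℝ F) x s) +
      innerSL ℝ (gradient F x - g)) (fderiv ℝ (fderiv ℝ F) x s - innerSL ℝ (T s))
    have h3 := norm_add_le (fderiv ℝ F xplus - fderiv ℝ F x - fderiv ℝ (fderiv ℝ F) x s)
      (innerSL ℝ (gradient F x - g))
    linarith
  have h2n : ‖innerSL ℝ (gradient F x - g)‖ = ‖gradient F x - g‖ := innerSL_apply_norm ℝ _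
  have h4n : ‖c • innerSL ℝ s‖ = (α / 2) * ‖s‖ ^ 2 := by
    rw [norm_smul c (innerSL ℝ s), innerSL_apply_norm ℝ, Real.norm_eq_abs, hc,
      abs_of_nonneg (by positivity : (0:ℝ) ≤ α / 2 * ‖s‖)]
    ring
  set δ : ℝ := specNorm (HF x - Hhat) with hδ
  have hδ0 : 0 ≤ δ := norm_nonneg _
  have hs0 : 0 ≤ ‖s‖ := norm_nonneg s
  have hYoung : δ * ‖s‖ ≤ (1 / (2 * (L₂ + α))) * δ ^ 2 + ((L₂ + α) / 2) * ‖s‖ ^ 2 := by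
    have h2k : (0:ℝ) < 2 * (L₂ + α) := by linarith
    have hP : (δ * ‖s‖ - ((L₂ + α) / 2) * ‖s‖ ^ 2) * (2 * (L₂ + α)) ≤ δ ^ 2 := by
      nlinarith [sq_nonneg (δ - (L₂ + α) * ‖s‖)]
    have := (le_div_iff₀ h2k).mpr hP
    have hdiv : δ ^ 2 / (2 * (L₂ + α)) = (1 / (2 * (L₂ + α))) * δ ^ 2 := by ring
    linarith [hdiv ▸ this]
  rw [hnormgrad]
  calc ‖fderiv ℝ F xplus‖ ≤ L₂ * ‖s‖ ^ 2 / 2 + ‖gradient F x - g‖ + δ * ‖s‖ +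
      (α / 2) * ‖s‖ ^ 2 := by
        have := hineq
        rw [h2n, h4n] at this
        linarith [htay2, hEs]
    _ ≤ (L₂ + α) * ‖s‖ ^ 2 + ‖gradient F x - g‖ + (1 / (2 * (L₂ + α))) * δ ^ 2 := by
        linarith [hYoung]
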